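/- The number of p-valent leaf-rooted plane trees with k leaves is zero unless k = (p-2)ℓ + 2 for some integer ℓ ≥ 1, and in that case it equals ((p-1)ℓ)! / (ℓ! · ((p-2)ℓ+1)!). -/

import Mathlib

/-- Plane trees: an ordered (plane) rooted tree given by the list of subtrees. -/
inductive PlaneTree : Type
  | node : List PlaneTree → PlaneTree

namespace PlaneTree

mutual
/-- The number of leaves of a plane tree (a node with no children is a leaf). -/
  def leaves : PlaneTree → ℕ
    | .node [] => 1
    | .node (t :: ts) => leaves t + leavesList ts
  def leavesList : List PlaneTree → ℕ
    | [] => 0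
    | t :: ts => leaves t + leavesList ts
end

/-- A plane tree (viewed as hanging from a root leaf) is `p`-valent if every internal
vertex has degree `p`, i.e. every node has either no children (it is a leaf) or
exactly `p - 1` children. -/
inductive PValent (p : ℕ) : PlaneTree → Prop
  | mk (ts : List PlaneTree) (h : ts = [] ∨ ts.length = p - 1)
      (hc : ∀ t ∈ ts, PValent p t) : PValent p (.node ts)

end PlaneTree


namespace FCaux

/-- weight of a letter: `true` (internal vertex with `q` children) has weight `q-1`,
`false` (leaf) has weight `-1`. -/
def wt (q : ℕ) (b : Bool) : ℤ := if b then (q : ℤ) - 1 else -1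

def wsum (q : ℕ) (w : List Bool) : ℤ := (w.map (wt q)).sum

@[simp] lemma wsum_nil (q : ℕ) : wsum q [] = 0 := rfl

@[simp] lemma wsum_cons (q : ℕ) (b : Bool) (w : List Bool) :
    wsum q (b :: w) = wt q b + wsum q w := by simp [wsum]

@[simp] lemma wsum_append (q : ℕ) (a b : List Bool) :
    wsum q (a ++ b) = wsum q a + wsum q b := by simp [wsum]

lemma wt_ge (q : ℕ) (b : Bool) : -1 ≤ wt q b := by
  cases b <;> simp [wt] <;> omega

lemma wsum_eq_count (q : ℕ) (w : List Bool) :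
    wsum q w = (w.count true : ℤ) * q - w.length := by
  induction w with
  | nil => simp
  | cons b w ih =>
    cases b <;> simp [List.count_cons, ih, wt] <;> ring

def Dom (q : ℕ) (w : List Bool) : Prop := ∀ u, u <+: w → u ≠ w → 0 ≤ wsum q u

def Valid (q : ℕ) (w : List Bool) : Prop := Dom q w ∧ wsum q w = -1

lemma Valid.ne_nil {q : ℕ} {w : List Bool} (h : Valid q w) : w ≠ [] := by
  rintro rfl; simpa using h.2

lemma dom_iff {q : ℕ} {w : List Bool} :
    Dom q w ↔ ∀ i < w.length, 0 ≤ wsum q (w.take i) := by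
  constructor
  · intro h i hi
    exact h _ (List.take_prefix i w) (fun he => by
      have := congrArg List.length he
      simp [Nat.min_eq_left hi.le] at this
      omega)
  · intro h u hu hne
    have h1 : u = w.take u.length := List.prefix_iff_eq_take.1 hu
    have h2 : u.length < w.length := by
      rcases Nat.lt_or_ge u.length w.length with h' | h'
      · exact h'
      · exact absurd (hu.eq_of_length (le_antisymm hu.length_le h')) hne
    rw [h1]; exact h _ h2

lemma valid_prefix_eq {q : ℕ} {u w : List Bool} (hw : Valid q w) (hu : Valid q u)
    (hp : u <+: w) : u = w := by
  by_contra hne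
  have h1 := hw.1 u hp hne
  have h2 := hu.2
  omega

lemma wsum_join {q : ℕ} {ws : List (List Bool)} (h : ∀ w ∈ ws, wsum q w = -1) :
    wsum q ws.flatten = -(ws.length : ℤ) := by
  induction ws with
  | nil => simp
  | cons w ws ih =>
    simp only [List.flatten_cons, wsum_append, List.length_cons]
    rw [h w (by simp), ih (fun x hx => h x (by simp [hx]))]
    push_cast; ring

lemma join_prefix_lb {q : ℕ} {ws : List (List Bool)} (h : ∀ w ∈ ws, Valid q w) :
    ∀ u, u <+: ws.flatten → u ≠ ws.flatten → -(ws.length : ℤ) < wsum q u := by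
  induction ws with
  | nil => intro u hu hne; exact absurd (List.prefix_nil.1 hu) hne
  | cons w ws ih =>
    intro u hu hne
    simp only [List.flatten_cons] at hu hne
    have hwpre : w <+: w ++ ws.flatten := List.prefix_append w _
    rcases List.prefix_or_prefix_of_prefix hu hwpre with h1 | h1
    · rcases eq_or_ne u w with rfl | hne'
      · -- u = w : sum = -1
        have hws : ws ≠ [] := by
          rintro rfl; simp at hne
        have h1 : 1 ≤ ws.length := List.length_pos_iff.2 hws
        have h2 := (h u (by simp)).2
        simp only [List.length_cons]
        push_cast
        omega
      · have h0 := (h w (by simp)).1 u h1 hne'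
        simp only [List.length_cons]
        push_cast
        omega
    · -- w <+: u
      obtain ⟨s, rfl⟩ := h1
      have hs : s <+: ws.flatten := by
        obtain ⟨r, hr⟩ := hu
        rw [List.append_assoc] at hr
        exact ⟨r, List.append_cancel_left hr⟩
      have hsne : s ≠ ws.flatten := fun hh => hne (by rw [hh])
      have := ih (fun x hx => h x (by simp [hx])) s hs hsne
      have := (h w (by simp)).2
      simp only [wsum_append, List.length_cons]
      push_cast at *; omega

lemma valid_cons_join {q : ℕ} {ws : List (List Bool)} (hlen : ws.length = q)
    (h : ∀ w ∈ ws, Valid q w) : Valid q (true :: ws.flatten) := by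
  have hsum : wsum q ws.flatten = -(q : ℤ) := by
    rw [wsum_join (fun w hw => (h w hw).2), hlen]
  constructor
  · intro u hu hne
    cases u with
    | nil => simp
    | cons b u =>
      obtain ⟨r, hr⟩ := hu
      rw [List.cons_append] at hr
      injection hr with hb hr'
      subst hb
      have hu' : u <+: ws.flatten := ⟨r, hr'⟩
      have hune : u ≠ ws.flatten := fun hh => hne (by rw [hh])
      have := join_prefix_lb h u hu' hune
      rw [hlen] at this
      simp only [wsum_cons, wt, if_true]
      omega
  · simp only [wsum_cons, wt, if_true, hsum]; ring


lemma take_step {q : ℕ} (w : List Bool) (n : ℕ) (h : n < w.length) :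
    wsum q (w.take (n+1)) = wsum q (w.take n) + wt q (w.get ⟨n, h⟩) := by
  have h2 : w.take (n+1) = w.take n ++ [w.get ⟨n, h⟩] := by
    rw [List.take_succ]
    simp [List.getElem?_eq_getElem h]
  rw [h2, wsum_append]
  simp [wsum]

lemma exists_split (q : ℕ) : ∀ (j : ℕ) (w : List Bool), wsum q w = -(j:ℤ) →
    (∀ u, u <+: w → u ≠ w → -(j:ℤ) < wsum q u) →
    ∃ ws : List (List Bool), ws.length = j ∧ (∀ x ∈ ws, Valid q x) ∧ ws.flatten = w := by
  intro j
  induction j with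
  | zero =>
    intro w hsum hpre
    have hw : w = [] := by
      by_contra hne
      have := hpre [] List.nil_prefix (Ne.symm hne)
      simp at this
    exact ⟨[], by simp [hw]⟩
  | succ j ih =>
    intro w hsum hpre
    classical
    have hex : ∃ i, wsum q (w.take i) < 0 :=
      ⟨w.length, by rw [List.take_length, hsum]; push_cast; omega⟩
    set i := Nat.find hex with hidef
    have hiP : wsum q (w.take i) < 0 := Nat.find_spec hex
    have hmin : ∀ i' < i, 0 ≤ wsum q (w.take i') := fun i' hi' =>
      le_of_not_gt (Nat.find_min hex hi')
    have hile : i ≤ w.length :=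
      Nat.find_min' hex (by rw [List.take_length, hsum]; push_cast; omega)
    have hipos : 0 < i := by
      rcases Nat.eq_zero_or_pos i with h0 | h
      · rw [h0] at hiP; simp at hiP
      · exact h
    obtain ⟨n, hn⟩ : ∃ n, i = n + 1 := ⟨i - 1, by omega⟩
    have hnlt : n < w.length := by omega
    have hstep := take_step (q := q) w n hnlt
    have hwt := wt_ge q (w.get ⟨n, hnlt⟩)
    have hn0 : 0 ≤ wsum q (w.take n) := hmin n (by omega)
    have hu1 : wsum q (w.take i) = -1 := by rw [hn]; rw [hn] at hiP; omega
    set u := w.take i with hudef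
    set v := w.drop i with hvdef
    have huv : u ++ v = w := List.take_append_drop i w
    have hulen : u.length = i := by rw [hudef, List.length_take]; omega
    have huvalid : Valid q u := by
      constructor
      · intro u' hu' hne
        have h1 : u' = u.take u'.length := List.prefix_iff_eq_take.1 hu'
        have h2 : u'.length < i := by
          have := hu'.length_le
          rw [hulen] at this
          rcases lt_or_eq_of_le this with h' | h'
          · exact h'
          · exact absurd (hu'.eq_of_length (by omega)) hne
        rw [h1, hudef, List.take_take, Nat.min_eq_left h2.le]
        exact hmin _ h2
      · exact hu1
    have hvsum : wsum q v = -(j:ℤ) := by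
      have : wsum q u + wsum q v = wsum q w := by rw [← wsum_append, huv]
      rw [hsum] at this
      push_cast at this ⊢
      omega
    have hvpre : ∀ u', u' <+: v → u' ≠ v → -(j:ℤ) < wsum q u' := by
      intro u' hu' hne
      have hle' := hu'.length_le
      obtain ⟨r, hr⟩ := hu'
      have hpre' : u ++ u' <+: w := ⟨r, by rw [List.append_assoc, hr, huv]⟩
      have hlen' : u'.length < v.length := by
        have := hle'
        rcases lt_or_eq_of_le this with h' | h'
        · exact h'
        · exact absurd ((List.IsPrefix.eq_of_length ⟨r, hr⟩) h') hne
      have hne' : u ++ u' ≠ w := by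
        intro hh
        have := congrArg List.length hh
        rw [← huv] at this
        simp at this
        omega
      have := hpre _ hpre' hne'
      rw [wsum_append, hu1] at this
      push_cast at this ⊢
      omega
    clear_value u v
    obtain ⟨ws', hlen', hval', hjoin'⟩ := ih v hvsum hvpre
    exact ⟨u :: ws', by simp [hlen'], fun x hx =>
      (List.mem_cons.1 hx).elim (fun h => h ▸ huvalid) (hval' x), by simp [hjoin', huv]⟩

open PlaneTree

mutual
/-- number of internal vertices -/
def ints : PlaneTree → ℕ
  | .node [] => 0
  | .node (t :: ts) => 1 + ints t + intsList ts
def intsList : List PlaneTree → ℕ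
  | [] => 0
  | t :: ts => ints t + intsList ts
end

mutual
/-- preorder code word of a tree -/
def word : PlaneTree → List Bool
  | .node [] => [false]
  | .node (t :: ts) => true :: (word t ++ wordList ts)
def wordList : List PlaneTree → List Bool
  | [] => []
  | t :: ts => word t ++ wordList ts
end

lemma wordList_eq_join : ∀ l : List PlaneTree, wordList l = (l.map word).flatten := by
  intro l
  induction l with
  | nil => simp [wordList]
  | cons t ts ih => simp [wordList, ih]

lemma word_node_cons (t : PlaneTree) (ts : List PlaneTree) :
    word (.node (t :: ts)) = true :: wordList (t :: ts) := by
  simp [word, wordList]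

lemma sizeOf_mem_lt {t : PlaneTree} {ts : List PlaneTree} (h : t ∈ ts) :
    sizeOf t < sizeOf (PlaneTree.node ts) := by
  have h1 := List.sizeOf_lt_of_mem h
  have h2 : sizeOf (PlaneTree.node ts) = 1 + sizeOf ts := by simp
  omega

lemma pack {q : ℕ} (hq : 2 ≤ q) :
    ∀ (N : ℕ) (t : PlaneTree), sizeOf t < N → PValent (q+1) t →
      Valid q (word t) ∧ (word t).length = q * ints t + 1 ∧ leaves t = (q-1) * ints t + 1 := by
  obtain ⟨q', rfl⟩ : ∃ q', q = q' + 1 := ⟨q - 1, by omega⟩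
  intro N
  induction N with
  | zero => intro t h; exact absurd h (Nat.not_lt_zero _)
  | succ N ih =>
    rintro t hsz ⟨ts, hts, hc⟩
    have hlist : ∀ l : List PlaneTree, (∀ x ∈ l, sizeOf x < N ∧ PValent (q'+1+1) x) →
        (∀ w ∈ l.map word, Valid (q'+1) w) ∧
        (wordList l).length = (q'+1) * intsList l + l.length ∧
        leavesList l = q' * intsList l + l.length := by
      intro l
      induction l with
      | nil => exact fun _ => ⟨by simp, by simp [wordList, intsList], by simp [leavesList, intsList]⟩
      | cons x xs ihl =>
        intro hmem
        obtain ⟨hx1, hx2⟩ := hmem x (by simp)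
        have hx := ih x hx1 hx2
        have hxs := ihl (fun y hy => hmem y (by simp [hy]))
        refine ⟨?_, ?_, ?_⟩
        · intro w hw
          rcases List.mem_cons.1 hw with rfl | hw'
          · exact hx.1
          · exact hxs.1 w hw'
        · simp only [wordList, intsList, List.length_append, List.length_cons, hx.2.1, hxs.2.1]
          ring
        · simp only [leavesList, intsList, List.length_cons, hx.2.2, hxs.2.2]
          have h9 : (q'+1) - 1 = q' := by omega
          rw [h9]
          ring
    cases ts with
    | nil =>
      refine ⟨⟨?_, by simp [word, wsum, wt]⟩, by simp [word, ints], by simp [leaves, ints]⟩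
      rw [dom_iff]
      intro i hi
      simp only [word, List.length_singleton] at hi ⊢
      interval_cases i
      simp
    | cons t0 ts0 =>
      have hlen : (t0 :: ts0).length = q' + 1 := by
        rcases hts with h | h
        · exact absurd h (by simp)
        · simpa using h
      have hmem : ∀ x ∈ t0 :: ts0, sizeOf x < N ∧ PValent (q'+1+1) x := by
        intro x hx
        refine ⟨?_, hc x hx⟩
        have := sizeOf_mem_lt hx
        omega
      obtain ⟨hval, hwl, hll⟩ := hlist _ hmem
      have hjoin := wordList_eq_join (t0 :: ts0)
      have hmaplen : ((t0 :: ts0).map word).length = q' + 1 := by simpa using hlen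
      have hvalid : Valid (q'+1) (word (.node (t0 :: ts0))) := by
        rw [word_node_cons, hjoin]
        exact valid_cons_join hmaplen hval
      have hints : ints (.node (t0 :: ts0)) = 1 + intsList (t0 :: ts0) := by
        simp [ints, intsList]; ring
      have hleaves : leaves (.node (t0 :: ts0)) = leavesList (t0 :: ts0) := by
        simp [leaves, leavesList]
      refine ⟨hvalid, ?_, ?_⟩
      · rw [word_node_cons, hints]
        simp only [List.length_cons, hwl, hlen]
        ring
      · rw [hleaves, hll, hints, hlen]
        have : (q'+1) - 1 = q' := by omega
        rw [this]
        ring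

lemma word_valid {q : ℕ} (hq : 2 ≤ q) {t : PlaneTree} (ht : PValent (q+1) t) :
    Valid q (word t) :=
  (pack hq (sizeOf t + 1) t (Nat.lt_succ_self _) ht).1

lemma word_inj {q : ℕ} (hq : 2 ≤ q) :
    ∀ (N : ℕ) (t1 : PlaneTree), sizeOf t1 < N → PValent (q+1) t1 →
      ∀ t2, PValent (q+1) t2 → word t1 = word t2 → t1 = t2 := by
  intro N
  induction N with
  | zero => intro t h; exact absurd h (Nat.not_lt_zero _)
  | succ N ih =>
    rintro t1 hsz ⟨ts1, hts1, hc1⟩ t2 hv2 heq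
    obtain ⟨ts2, hts2, hc2⟩ := hv2
    have hlist : ∀ l1 : List PlaneTree, (∀ x ∈ l1, sizeOf x < N ∧ PValent (q+1) x) →
        ∀ l2 : List PlaneTree, (∀ x ∈ l2, PValent (q+1) x) →
        l1.length = l2.length → wordList l1 = wordList l2 → l1 = l2 := by
      intro l1
      induction l1 with
      | nil =>
        intro _ l2 _ hlen _
        cases l2 with
        | nil => rfl
        | cons y ys => simp at hlen
      | cons x xs ihl =>
        intro hmem l2 hl2 hlen hweq
        cases l2 with
        | nil => simp at hlen
        | cons y ys =>
          obtain ⟨hx1, hx2⟩ := hmem x (by simp)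
          have hvx : Valid q (word x) := word_valid hq hx2
          have hvy : Valid q (word y) := word_valid hq (hl2 y (by simp))
          simp only [wordList] at hweq
          have hpx : word x <+: word x ++ wordList xs := List.prefix_append _ _
          have hpy : word y <+: word x ++ wordList xs := by
            rw [hweq]; exact List.prefix_append _ _
          have hxy : word x = word y := by
            rcases List.prefix_or_prefix_of_prefix hpx hpy with h | h
            · exact valid_prefix_eq hvy hvx h
            · exact (valid_prefix_eq hvx hvy h).symm
          have hx_eq_y : x = y := ih x hx1 hx2 y (hl2 y (by simp)) hxy
          rw [hxy] at hweq
          have hrest := List.append_cancel_left hweq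
          have : xs = ys := ihl (fun z hz => hmem z (by simp [hz])) ys
            (fun z hz => hl2 z (by simp [hz])) (by simpa using hlen) hrest
          rw [hx_eq_y, this]
    cases ts1 with
    | nil =>
      cases ts2 with
      | nil => rfl
      | cons y ys =>
        rw [word_node_cons] at heq
        simp only [word] at heq
        exact absurd heq (by simp)
    | cons x xs =>
      cases ts2 with
      | nil =>
        rw [word_node_cons] at heq
        simp only [word] at heq
        exact absurd heq (by simp)
      | cons y ys =>
        rw [word_node_cons, word_node_cons] at heq
        have hweq : wordList (x :: xs) = wordList (y :: ys) := by
          injection heq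
        have hlen1 : (x :: xs).length = q := by
          rcases hts1 with h | h
          · exact absurd h (by simp)
          · simpa using h
        have hlen2 : (y :: ys).length = q := by
          rcases hts2 with h | h
          · exact absurd h (by simp)
          · simpa using h
        have hmem : ∀ z ∈ x :: xs, sizeOf z < N ∧ PValent (q+1) z := by
          intro z hz
          refine ⟨?_, hc1 z hz⟩
          have := sizeOf_mem_lt hz
          omega
        have := hlist _ hmem _ hc2 (by rw [hlen1, hlen2]) hweq
        rw [this]

lemma word_surj {q : ℕ} (hq : 2 ≤ q) :
    ∀ (L : ℕ) (w : List Bool), w.length < L → Valid q w →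
      ∃ t, PValent (q+1) t ∧ word t = w := by
  intro L
  induction L with
  | zero => intro w h; exact absurd h (Nat.not_lt_zero _)
  | succ L ih =>
    intro w hlen hw
    cases w with
    | nil => exact absurd rfl hw.ne_nil
    | cons b w' =>
      cases b with
      | false =>
        have hw' : w' = [] := by
          by_contra hne
          have hpre : [false] <+: false :: w' := ⟨w', rfl⟩
          have hne2 : [false] ≠ false :: w' := by
            intro h
            have := congrArg List.length h
            simp at this
            exact hne this
          have := hw.1 [false] hpre hne2
          simp [wsum, wt] at this
        refine ⟨.node [], PValent.mk [] (Or.inl rfl) (by simp), by simp [word, hw']⟩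
      | true =>
        have hsum' : wsum q w' = -(q : ℤ) := by
          have := hw.2
          simp only [wsum_cons, wt, if_true] at this
          omega
        have hpre' : ∀ u, u <+: w' → u ≠ w' → -(q:ℤ) < wsum q u := by
          intro u hu hne
          obtain ⟨r, hr⟩ := hu
          have h1 : (true :: u) <+: (true :: w') := ⟨r, by rw [List.cons_append, hr]⟩
          have h2 : (true :: u) ≠ (true :: w') := by
            intro h; apply hne; injection h
          have := hw.1 _ h1 h2
          simp only [wsum_cons, wt, if_true] at this
          omega
        obtain ⟨ws, hwslen, hwsval, hwsjoin⟩ := exists_split q q w' hsum' hpre'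
        have hbuild : ∀ l : List (List Bool), (∀ x ∈ l, Valid q x ∧ x.length < L) →
            ∃ ts : List PlaneTree, (∀ t ∈ ts, PValent (q+1) t) ∧ ts.map word = l := by
          intro l
          induction l with
          | nil => exact fun _ => ⟨[], by simp, by simp⟩
          | cons x xs ihl =>
            intro hmem
            obtain ⟨hx1, hx2⟩ := hmem x (by simp)
            obtain ⟨t, ht1, ht2⟩ := ih x hx2 hx1
            obtain ⟨ts, hts1, hts2⟩ := ihl (fun y hy => hmem y (by simp [hy]))
            exact ⟨t :: ts, fun z hz => (List.mem_cons.1 hz).elim (fun h => h ▸ ht1) (hts1 z),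
              by simp [ht2, hts2]⟩
        have hmem : ∀ x ∈ ws, Valid q x ∧ x.length < L := by
          intro x hx
          refine ⟨hwsval x hx, ?_⟩
          have h1 : x <:+: ws.flatten := List.infix_of_mem_flatten hx
          have h2 := h1.length_le
          rw [hwsjoin] at h2
          simp only [List.length_cons] at hlen
          omega
        obtain ⟨ts, hts1, hts2⟩ := hbuild ws hmem
        have htslen : ts.length = q := by
          have := congrArg List.length hts2
          simpa [hwslen] using this
        cases ts with
        | nil => rw [← htslen] at hq; simp at hq
        | cons t0 ts0 =>
          refine ⟨.node (t0 :: ts0), PValent.mk _ (Or.inr (by simpa using htslen)) hts1, ?_⟩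
          rw [word_node_cons, wordList_eq_join, hts2, hwsjoin]

lemma wsum_rotate (q : ℕ) (w : List Bool) (i : ℕ) : wsum q (w.rotate i) = wsum q w :=
  ((List.rotate_perm w i).map (wt q)).sum_eq

lemma wsum_drop (q : ℕ) (w : List Bool) (i : ℕ) :
    wsum q (w.drop i) = wsum q w - wsum q (w.take i) := by
  have := congrArg (wsum q) (List.take_append_drop i w)
  rw [wsum_append] at this
  omega

lemma wsum_take_drop (q : ℕ) (w : List Bool) (i m : ℕ) :
    wsum q ((w.drop i).take m) = wsum q (w.take (i+m)) - wsum q (w.take i) := by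
  have h1 : w.take (i+m) = w.take i ++ (w.drop i).take m := List.take_add ..
  have := congrArg (wsum q) h1
  rw [wsum_append] at this
  omega

/-- prefix sums of a rotation -/
lemma wsum_rotate_take (q : ℕ) (w : List Bool) (i m : ℕ) (hi : i ≤ w.length)
    (hm : m ≤ w.length) :
    wsum q ((w.rotate i).take m) =
      if m ≤ w.length - i then wsum q (w.take (i+m)) - wsum q (w.take i)
      else wsum q w - wsum q (w.take i) + wsum q (w.take (m - (w.length - i))) := by
  have hld : (w.drop i).length = w.length - i := List.length_drop ..
  rw [List.rotate_eq_drop_append_take hi, List.take_append, hld]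
  split_ifs with h
  · rw [show m - (w.length - i) = 0 from by omega, List.take_zero, List.append_nil,
      wsum_take_drop]
  · rw [List.take_of_length_le (by rw [hld]; omega), wsum_append, wsum_drop,
      List.take_take, Nat.min_eq_left (by omega)]

def MinAt (q : ℕ) (w : List Bool) (i : ℕ) : Prop :=
  (∀ k, i ≤ k → k < w.length → wsum q (w.take i) ≤ wsum q (w.take k)) ∧
  (∀ j, j < i → wsum q (w.take i) < wsum q (w.take j))

lemma minAt_unique {q : ℕ} {w : List Bool} {i i' : ℕ} (hi : i < w.length)
    (hi' : i' < w.length) (h1 : MinAt q w i) (h2 : MinAt q w i') : i = i' := by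
  rcases Nat.lt_trichotomy i i' with h | h | h
  · have a1 := h1.1 i' (le_of_lt h) hi'
    have a2 := h2.2 i h
    omega
  · exact h
  · have a1 := h2.1 i (le_of_lt h) hi
    have a2 := h1.2 i' h
    omega

lemma exists_minAt (q : ℕ) (w : List Bool) (hw : w ≠ []) :
    ∃ i, i < w.length ∧ MinAt q w i := by
  classical
  have hpos : 0 < w.length := List.length_pos_iff.2 hw
  obtain ⟨a, ha, hamin⟩ := Finset.exists_min_image (Finset.range w.length)
    (fun i => wsum q (w.take i)) ⟨0, by simpa using hpos⟩
  rw [Finset.mem_range] at ha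
  have hex : ∃ i, i < w.length ∧ ∀ k, k < w.length → wsum q (w.take i) ≤ wsum q (w.take k) :=
    ⟨a, ha, fun k hk => hamin k (Finset.mem_range.2 hk)⟩
  obtain ⟨hilt, himin⟩ := Nat.find_spec hex
  refine ⟨Nat.find hex, hilt, fun k hik hk => himin k hk, ?_⟩
  intro j hj
  have hnj := Nat.find_min hex hj
  push_neg at hnj
  obtain ⟨k, hk, hkgt⟩ := hnj (by omega)
  have := himin k hk
  omega

lemma rotate_valid_iff {q : ℕ} {w : List Bool} (hsum : wsum q w = -1) {i : ℕ}
    (hi : i < w.length) : Valid q (w.rotate i) ↔ MinAt q w i := by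
  have hN : (w.rotate i).length = w.length := List.length_rotate ..
  have hrsum : wsum q (w.rotate i) = -1 := by rw [wsum_rotate, hsum]
  have hkey : ∀ m, m < w.length →
      wsum q ((w.rotate i).take m) =
        if m ≤ w.length - i then wsum q (w.take (i+m)) - wsum q (w.take i)
        else wsum q w - wsum q (w.take i) + wsum q (w.take (m - (w.length - i))) :=
    fun m hm => wsum_rotate_take q w i m (le_of_lt hi) (le_of_lt hm)
  constructor
  · rintro ⟨hdom, -⟩
    rw [dom_iff] at hdom
    constructor
    · intro k hik hk
      have hm : k - i < w.length := by omega
      have := hdom (k - i) (by omega)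
      rw [hkey _ hm, if_pos (by omega)] at this
      rw [show i + (k - i) = k by omega] at this
      omega
    · intro j hj
      -- use m = w.length - i + j
      have hm : w.length - i + j < w.length := by omega
      have := hdom (w.length - i + j) (by omega)
      rw [hkey _ hm] at this
      by_cases hj0 : j = 0
      · subst hj0
        rw [if_pos (by omega), show i + (w.length - i + 0) = w.length by omega,
          List.take_length, hsum] at this
        -- S i ≤ -1 < 0 = S 0
        simp only [List.take_zero, wsum_nil]
        omega
      · rw [if_neg (by omega), show w.length - i + j - (w.length - i) = j by omega] at this
        omega
  · rintro ⟨hmin1, hmin2⟩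
    constructor
    · rw [dom_iff, hN]
      intro m hm
      rw [hkey _ hm]
      split_ifs with h
      · by_cases hend : i + m = w.length
        · rw [hend, List.take_length, hsum]
          have hipos : 0 < i := by omega
          have := hmin2 0 hipos
          simp only [List.take_zero, wsum_nil] at this
          omega
        · have := hmin1 (i+m) (by omega) (by omega)
          omega
      · have hjlt : m - (w.length - i) < i := by omega
        have := hmin2 _ hjlt
        omega
    · exact hrsum

lemma rotate_back (l : List Bool) {j : ℕ} (hj : j < l.length) :
    (l.rotate j).rotate ((l.length - j) % l.length) = l := by
  rw [List.rotate_rotate]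
  rcases Nat.eq_zero_or_pos j with rfl | hjpos
  · rw [Nat.sub_zero, Nat.mod_self, Nat.add_zero, List.rotate_zero]
  · rw [Nat.mod_eq_of_lt (by omega), show j + (l.length - j) = l.length by omega,
      List.rotate_length]


lemma countL {N : ℕ} (f : Fin N → Bool) :
    (List.ofFn f).count true = (Finset.univ.filter fun i => f i = true).card := by
  classical
  rw [List.ofFn_eq_map, List.count, List.countP_map, Fin.univ_def]
  simp only [Finset.filter, Finset.card]
  simp [List.countP_eq_length_filter, Multiset.filter_coe, Function.comp_def]

lemma get_count {l : List Bool} {N : ℕ} (h : l.length = N) :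
    (Finset.univ.filter fun i : Fin N => l.get (Fin.cast h.symm i) = true).card
      = l.count true := by
  subst h
  rw [← countL]
  congr 1
  rw [show (fun i : Fin l.length => l.get (Fin.cast (Eq.refl l.length).symm i)) = l.get
    from rfl, List.ofFn_get]

lemma card_W (N n : ℕ) :
    Nat.card {w : List Bool // w.length = N ∧ w.count true = n} = N.choose n := by
  classical
  have e1 : {w : List Bool // w.length = N ∧ w.count true = n} ≃
      {f : Fin N → Bool // (Finset.univ.filter fun i => f i = true).card = n} :=
    { toFun := fun w => ⟨fun i => w.1.get (Fin.cast w.2.1.symm i), by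
        rw [get_count w.2.1]; exact w.2.2⟩
      invFun := fun f => ⟨List.ofFn f.1, by
        refine ⟨List.length_ofFn, ?_⟩
        rw [countL]; exact f.2⟩
      left_inv := by
        rintro ⟨l, hl, hc⟩
        apply Subtype.ext
        simp only
        subst hl
        rw [show (fun i : Fin l.length => l.get (Fin.cast (Eq.refl l.length).symm i)) = l.get
          from rfl, List.ofFn_get]
      right_inv := by
        rintro ⟨f, hf⟩
        apply Subtype.ext
        funext i
        simp [List.get_ofFn] }
  have e2 : {f : Fin N → Bool // (Finset.univ.filter fun i => f i = true).card = n} ≃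
      {s : Finset (Fin N) // s.card = n} :=
    { toFun := fun f => ⟨Finset.univ.filter fun i => f.1 i = true, f.2⟩
      invFun := fun s => ⟨fun i => decide (i ∈ s.1), by
        have h : (Finset.univ.filter fun i => decide (i ∈ s.1) = true) = s.1 := by
          ext i; simp
        rw [h]; exact s.2⟩
      left_inv := by
        rintro ⟨f, hf⟩
        apply Subtype.ext
        funext i
        simp
      right_inv := by
        rintro ⟨s, hs⟩
        apply Subtype.ext
        ext i
        simp }
  rw [Nat.card_congr (e1.trans e2), Nat.card_eq_fintype_card, Fintype.card_finset_len,
    Fintype.card_fin]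

lemma valid_count {q n : ℕ} (hq : 2 ≤ q) {w : List Bool} (hv : Valid q w)
    (hl : w.length = q * n + 1) : w.count true = n := by
  have h1 := wsum_eq_count q w
  rw [hv.2, hl] at h1
  have h2 : ((w.count true : ℤ)) * q = (n : ℤ) * q := by
    have h3 : (n:ℤ) * q = (q:ℤ) * n := by ring
    push_cast at h1
    omega
  have hq0 : (q : ℤ) ≠ 0 := by positivity
  exact_mod_cast mul_right_cancel₀ hq0 h2

lemma count_sum (q n : ℕ) {w : List Bool} (hl : w.length = q * n + 1)
    (hc : w.count true = n) : wsum q w = -1 := by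
  have h1 := wsum_eq_count q w
  rw [hc, hl] at h1
  have h3 : (n:ℤ) * q = (q:ℤ) * n := by ring
  push_cast at h1
  omega

lemma card_valid_mul (q n : ℕ) (hq : 2 ≤ q) :
    Nat.card {w : List Bool // Valid q w ∧ w.length = q*n+1} * (q*n+1)
      = (q*n+1).choose n := by
  classical
  set N := q*n+1 with hN
  have hNpos : 0 < N := by omega
  have key : Function.Bijective
      (fun p : {w : List Bool // Valid q w ∧ w.length = N} × Fin N =>
        (⟨p.1.1.rotate p.2.1, by
          rw [List.length_rotate]
          exact p.1.2.2, by
          rw [(List.rotate_perm _ _).count_eq]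
          exact valid_count hq p.1.2.1 p.1.2.2⟩ :
          {w : List Bool // w.length = N ∧ w.count true = n})) := by
    constructor
    · rintro ⟨⟨v, hv, hvl⟩, jv, hjlt⟩ ⟨⟨v', hv', hvl'⟩, jv', hjlt'⟩ heq
      simp only [Subtype.mk.injEq, Prod.mk.injEq, Fin.mk.injEq] at heq ⊢
      set w := v.rotate jv with hwdef
      have hweq : v'.rotate jv' = w := heq.symm
      have hwlen : w.length = N := by rw [hwdef, List.length_rotate, hvl]
      have hwsum : wsum q w = -1 := by rw [hwdef, wsum_rotate, hv.2]
      have hb1 : w.rotate ((N - jv) % N) = v := by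
        have h9 := rotate_back v (show jv < v.length by omega)
        rw [hvl] at h9
        exact h9
      have hb2 : w.rotate ((N - jv') % N) = v' := by
        have h9 := rotate_back v' (show jv' < v'.length by omega)
        rw [hvl', hweq] at h9
        exact h9
      have hval1 : Valid q (w.rotate ((N - jv) % N)) := by rw [hb1]; exact hv
      have hval2 : Valid q (w.rotate ((N - jv') % N)) := by rw [hb2]; exact hv'
      have hlt1 : (N - jv) % N < w.length := by rw [hwlen]; exact Nat.mod_lt _ hNpos
      have hlt2 : (N - jv') % N < w.length := by rw [hwlen]; exact Nat.mod_lt _ hNpos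
      have hieq : (N - jv) % N = (N - jv') % N :=
        minAt_unique hlt1 hlt2 ((rotate_valid_iff hwsum hlt1).1 hval1)
          ((rotate_valid_iff hwsum hlt2).1 hval2)
      have d1 : (N - jv) % N = if jv = 0 then 0 else N - jv := by
        split_ifs with h
        · rw [h, Nat.sub_zero, Nat.mod_self]
        · exact Nat.mod_eq_of_lt (by omega)
      have d2 : (N - jv') % N = if jv' = 0 then 0 else N - jv' := by
        split_ifs with h
        · rw [h, Nat.sub_zero, Nat.mod_self]
        · exact Nat.mod_eq_of_lt (by omega)
      have hj : jv = jv' := by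
        rw [d1, d2] at hieq
        split_ifs at hieq <;> omega
      refine ⟨?_, hj⟩
      rw [← hb1, ← hb2, hieq]
    · rintro ⟨w, hwl, hwc⟩
      have hwsum : wsum q w = -1 := count_sum q n hwl hwc
      have hwne : w ≠ [] := by
        intro h
        rw [h] at hwl
        simp at hwl
      have hilt0 := exists_minAt q w hwne
      obtain ⟨i, hilt, hmin⟩ := hilt0
      have hval : Valid q (w.rotate i) := (rotate_valid_iff hwsum hilt).2 hmin
      refine ⟨⟨⟨w.rotate i, hval, by rw [List.length_rotate, hwl]⟩,
        ⟨(N - i) % N, Nat.mod_lt _ hNpos⟩⟩, ?_⟩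
      apply Subtype.ext
      simp only
      rw [← hwl]
      exact rotate_back w hilt
  have hcard := Nat.card_congr (Equiv.ofBijective _ key)
  rw [Nat.card_prod, Nat.card_eq_fintype_card (α := Fin N), Fintype.card_fin] at hcard
  rw [hcard, card_W]

lemma ints_pos {ts : List PlaneTree} (h : ts ≠ []) : 1 ≤ ints (.node ts) := by
  cases ts with
  | nil => exact absurd rfl h
  | cons t0 ts0 =>
    simp only [ints]
    omega

lemma ints_node_nil : ints (.node []) = 0 := by simp [ints]

lemma card_trees (q ℓ : ℕ) (hq : 2 ≤ q) :
    Nat.card {t : PlaneTree // PValent (q+1) t ∧ ints t = ℓ} * (q*ℓ+1)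
      = (q*ℓ+1).choose ℓ := by
  have hbij : Function.Bijective
      (fun t : {t : PlaneTree // PValent (q+1) t ∧ ints t = ℓ} =>
        (⟨word t.1, word_valid hq t.2.1, by
          rw [(pack hq (sizeOf t.1 + 1) t.1 (Nat.lt_succ_self _) t.2.1).2.1, t.2.2]⟩ :
          {w : List Bool // Valid q w ∧ w.length = q*ℓ+1})) := by
    constructor
    · rintro ⟨t1, hv1, hi1⟩ ⟨t2, hv2, hi2⟩ heq
      simp only [Subtype.mk.injEq] at heq ⊢
      exact word_inj hq (sizeOf t1 + 1) t1 (Nat.lt_succ_self _) hv1 t2 hv2 heq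
    · rintro ⟨w, hwv, hwl⟩
      obtain ⟨t, htv, htw⟩ := word_surj hq (w.length + 1) w (Nat.lt_succ_self _) hwv
      have hlen := (pack hq (sizeOf t + 1) t (Nat.lt_succ_self _) htv).2.1
      rw [htw, hwl] at hlen
      have hints : ints t = ℓ := Nat.eq_of_mul_eq_mul_left (by omega)
        (by omega : q * ints t = q * ℓ)
      exact ⟨⟨t, htv, hints⟩, Subtype.ext htw⟩
  rw [Nat.card_congr (Equiv.ofBijective _ hbij), card_valid_mul q ℓ hq]

end FCaux
/-- A `p`-valent leaf-rooted tree with `k` leaves: the marked root leaf is attached to a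
tree whose root is an internal (non-leaf) vertex, all internal vertices have degree `p`,
and the total number of leaves (including the root leaf) is `k`. -/
def LeafRootedTrees (p k : ℕ) : Set PlaneTree :=
  {t | PlaneTree.PValent p t ∧ (∃ ts, ts ≠ [] ∧ t = .node ts) ∧ PlaneTree.leaves t + 1 = k}

/-- The number of `p`-valent leaf-rooted plane trees with `k` leaves is zero unless
`k = (p-2)ℓ + 2` for some `ℓ ≥ 1`, in which case it is `((p-1)ℓ)! / (ℓ! ((p-2)ℓ+1)!)`. -/
theorem stmt0 (p : ℕ) (hp : 3 ≤ p) :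
    (∀ k : ℕ, (∀ ℓ : ℕ, 1 ≤ ℓ → k ≠ (p - 2) * ℓ + 2) → Nat.card (LeafRootedTrees p k) = 0) ∧
    (∀ ℓ : ℕ, 1 ≤ ℓ →
      Nat.card (LeafRootedTrees p ((p - 2) * ℓ + 2))
        = ((p - 1) * ℓ).factorial / (ℓ.factorial * ((p - 2) * ℓ + 1).factorial)) := by
  obtain ⟨r, rfl⟩ : ∃ r, p = r + 3 := ⟨p - 3, by omega⟩
  have hq : 2 ≤ r + 2 := by omega
  have hp1 : r + 3 = (r + 2) + 1 := rfl
  have hp2 : r + 3 - 2 = r + 1 := by omega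
  have hp3 : r + 3 - 1 = r + 2 := by omega
  have hqm1 : r + 2 - 1 = r + 1 := by omega
  constructor
  · intro k hk
    have hempty : LeafRootedTrees (r+3) k = ∅ := by
      rw [Set.eq_empty_iff_forall_notMem]
      rintro t ⟨hval, ⟨ts, hts, rfl⟩, hcount⟩
      have hle : PlaneTree.leaves (.node ts)
          = (r+2-1) * FCaux.ints (.node ts) + 1 :=
        (FCaux.pack hq (sizeOf (PlaneTree.node ts) + 1) _ (Nat.lt_succ_self _)
          (hp1 ▸ hval)).2.2
      have hpos := FCaux.ints_pos hts
      exact hk (FCaux.ints (.node ts)) hpos (by rw [hp2, ← hcount, hle, hqm1])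
    rw [hempty]
    simp
  · intro ℓ hℓ
    rw [hp2, hp3]
    have hset : LeafRootedTrees (r+3) ((r+1) * ℓ + 2)
        = {t : PlaneTree | PlaneTree.PValent ((r+2)+1) t ∧ FCaux.ints t = ℓ} := by
      ext t
      simp only [LeafRootedTrees, Set.mem_setOf_eq]
      constructor
      · rintro ⟨hval, ⟨ts, hts, rfl⟩, hcount⟩
        refine ⟨hp1 ▸ hval, ?_⟩
        have hle := (FCaux.pack hq (sizeOf (PlaneTree.node ts) + 1) _ (Nat.lt_succ_self _)
          (hp1 ▸ hval)).2.2
        rw [hqm1] at hle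
        rw [hle] at hcount
        exact Nat.eq_of_mul_eq_mul_left (show 0 < r+1 by omega) (by omega)
      · rintro ⟨hval, hints⟩
        refine ⟨hp1 ▸ hval, ?_, ?_⟩
        · cases t with
          | node ts =>
            refine ⟨ts, ?_, rfl⟩
            rintro rfl
            rw [FCaux.ints_node_nil] at hints
            omega
        · have hle := (FCaux.pack hq (sizeOf t + 1) t (Nat.lt_succ_self _) hval).2.2
          rw [hqm1] at hle
          rw [hle, hints]
    rw [hset]
    have hcongr : Nat.card ↥{t : PlaneTree | PlaneTree.PValent ((r+2)+1) t ∧ FCaux.ints t = ℓ}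
        = Nat.card {t : PlaneTree // PlaneTree.PValent ((r+2)+1) t ∧ FCaux.ints t = ℓ} := rfl
    rw [hcongr]
    set C := Nat.card {t : PlaneTree // PlaneTree.PValent ((r+2)+1) t ∧ FCaux.ints t = ℓ}
      with hC
    have htrees := FCaux.card_trees (r+2) ℓ hq
    rw [← hC] at htrees
    have hle2 : ℓ ≤ (r+2)*ℓ+1 := by
      have : 1 * ℓ ≤ (r+2) * ℓ := Nat.mul_le_mul_right ℓ (by omega)
      omega
    have hfac := Nat.choose_mul_factorial_mul_factorial hle2
    have hsub : (r+2)*ℓ + 1 - ℓ = (r+1)*ℓ + 1 := by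
      have : (r+2)*ℓ = (r+1)*ℓ + ℓ := by ring
      omega
    rw [hsub] at hfac
    have hfac2 : ((r+2)*ℓ+1).factorial = ((r+2)*ℓ+1) * ((r+2)*ℓ).factorial :=
      Nat.factorial_succ _
    have hkey : C * (ℓ.factorial * ((r+1)*ℓ+1).factorial) = ((r+2)*ℓ).factorial := by
      apply Nat.eq_of_mul_eq_mul_left (show 0 < (r+2)*ℓ+1 by omega)
      calc ((r+2)*ℓ+1) * (C * (ℓ.factorial * ((r+1)*ℓ+1).factorial))
          = (C * ((r+2)*ℓ+1)) * ℓ.factorial * ((r+1)*ℓ+1).factorial := by ring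
        _ = ((r+2)*ℓ+1).choose ℓ * ℓ.factorial * ((r+1)*ℓ+1).factorial := by rw [htrees]
        _ = ((r+2)*ℓ+1).factorial := hfac
        _ = ((r+2)*ℓ+1) * ((r+2)*ℓ).factorial := hfac2
    have hdpos : 0 < ℓ.factorial * ((r+1)*ℓ+1).factorial :=
      Nat.mul_pos (Nat.factorial_pos _) (Nat.factorial_pos _)
    exact (Nat.div_eq_of_eq_mul_left hdpos hkey.symm).symm
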